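/- For every real σ with 0 < σ < 1 and every real t, one has ζ(σ + it) = 0 if and only if ∫_{-∞}^∞ e^{itx} V_σ(x) dx = 0. -/

import Mathlib

open Complex MeasureTheory Real Set Asymptotics Filter


noncomputable def Fη : ℝ → ℂ := fun u => (((1 + Real.exp u)⁻¹ : ℝ) : ℂ)

noncomputable def aη : ℕ → ℂ := fun n => if n = 0 then 0 else (-1) ^ (n + 1)

lemma hasSum_Fη {u : ℝ} (hu : 0 < u) :
    HasSum (fun n : ℕ => aη n * Real.exp (-(n : ℝ) * u)) (Fη u) := by
  set x : ℝ := Real.exp (-u) with hx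
  have hx1 : ‖x‖ < 1 := by
    rw [Real.norm_eq_abs, abs_of_pos (Real.exp_pos _)]
    exact Real.exp_lt_one_iff.mpr (by linarith)
  have hgeo : HasSum (fun n : ℕ => (-(x:ℂ)) ^ n) (1 - (-(x:ℂ)))⁻¹ := by
    apply hasSum_geometric_of_norm_lt_one
    simpa using hx1
  have hgeo' : HasSum (fun n : ℕ => -((-(x:ℂ)) ^ n)) (-(1 - (-(x:ℂ)))⁻¹) := hgeo.neg
  have hupd := hgeo'.update 0 0
  have hfun : Function.update (fun n : ℕ => -((-(x:ℂ)) ^ n)) 0 0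
      = fun n : ℕ => aη n * Real.exp (-(n : ℝ) * u) := by
    funext n
    rcases n with _ | m
    · simp [aη]
    · rw [Function.update_of_ne (by simp)]
      have : Real.exp (-((m+1 : ℕ) : ℝ) * u) = x ^ ((m+1 : ℕ)) := by
        rw [hx, ← Real.exp_nat_mul]
        ring_nf
      simp only [aη, Nat.succ_ne_zero, if_neg, Nat.add_one_ne_zero]
      rw [this]
      push_cast
      rw [neg_pow]
      ring_nf
  rw [hfun] at hupd
  convert hupd using 1
  · rfl
  rw [show (0:ℂ) - -(-(x:ℂ)) ^ 0 + -(1 - -(x:ℂ))⁻¹ = 1 + -(1 - -(x:ℂ))⁻¹ by ring]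
  have hx0 : (0:ℝ) < x := Real.exp_pos _
  have h1x : (1 : ℂ) + (x:ℂ) ≠ 0 := by
    rw [← ofReal_one, ← ofReal_add, ne_eq, ofReal_eq_zero]
    exact (by positivity : (0:ℝ) < 1 + x).ne'
  simp only [Fη]
  rw [sub_neg_eq_add]
  have : ((1 + Real.exp u)⁻¹ : ℝ) = x / (1 + x) := by
    rw [hx, Real.exp_neg]
    have h2 : (0:ℝ) < Real.exp u := Real.exp_pos _
    field_simp
    ring
  rw [this]
  push_cast
  field_simp
  ring

lemma mellin_Fη_eq {s : ℂ} (hs : 1 < s.re) :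
    mellin Fη s = Complex.Gamma s * (1 - 2 ^ (1 - s)) * riemannZeta s := by
  have hs0 : 0 < s.re := by linarith
  have hsne : s ≠ 0 := fun h => by simp [h] at hs0
  have hp : ∀ n : ℕ, aη n = 0 ∨ 0 < ((n : ℝ)) := by
    intro n
    rcases Nat.eq_zero_or_pos n with h | h
    · exact Or.inl (by simp [aη, h])
    · exact Or.inr (by exact_mod_cast h)
  have hF : ∀ u ∈ Ioi (0:ℝ), HasSum (fun n : ℕ => aη n * Real.exp (-(n:ℝ) * u)) (Fη u) :=
    fun u hu => hasSum_Fη hu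
  have h_sum : Summable fun n : ℕ => ‖aη n‖ / (n : ℝ) ^ s.re := by
    refine Summable.of_nonneg_of_le (fun n => by positivity) (fun n => ?_)
      ((Real.summable_one_div_nat_rpow).mpr hs)
    rcases Nat.eq_zero_or_pos n with h | h
    · subst h; simp [aη]; positivity
    · have : ‖aη n‖ = 1 := by
        simp [aη, Nat.pos_iff_ne_zero.mp h]
      rw [this]
  have hmain := hasSum_mellin (F := Fη) (p := fun n : ℕ => (n:ℝ)) hp hs0 hF h_sum
  -- the Dirichlet series
  set S : ℕ → ℂ := fun n => 1 / (n : ℂ) ^ s with hS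
  have hSsum : Summable S := Complex.summable_one_div_nat_cpow.mpr hs
  have hS0 : S 0 = 0 := by simp [hS, Complex.zero_cpow hsne]
  set T : ℕ → ℂ := Set.indicator (Set.range (fun m : ℕ => 2 * m)) S with hT
  have hTsum : Summable T := hSsum.indicator _
  have hpt : ∀ n : ℕ, aη n / (n : ℂ) ^ s = S n - 2 * T n := by
    intro n
    rcases Nat.eq_zero_or_pos n with h | h
    · subst h
      have : T 0 = S 0 := Set.indicator_of_mem (Set.mem_range.mpr ⟨0, by simp⟩) S
      simp [aη, this, hS0]
    · have hne : n ≠ 0 := Nat.pos_iff_ne_zero.mp h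
      rcases Nat.even_or_odd n with he | ho
      · have hmem : n ∈ Set.range (fun m : ℕ => 2 * m) := by
          obtain ⟨m, hm⟩ := he
          exact Set.mem_range.mpr ⟨m, show 2 * m = n by omega⟩
        have hTn : T n = S n := Set.indicator_of_mem hmem S
        have han : aη n = -1 := by
          simp only [aη, if_neg hne]
          have : Odd (n + 1) := Even.add_one he
          exact this.neg_one_pow
        rw [hTn, han, hS]
        ring
      · have hmem : n ∉ Set.range (fun m : ℕ => 2 * m) := by
          rintro ⟨m, hm⟩
          have hm' : 2 * m = n := hm
          exact (Nat.not_even_iff_odd.mpr ho) ⟨m, by omega⟩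
        have hTn : T n = 0 := Set.indicator_of_notMem hmem S
        have han : aη n = 1 := by
          simp only [aη, if_neg hne]
          have : Even (n + 1) := Odd.add_one ho
          exact this.neg_one_pow
        rw [hTn, han, hS]
        ring
  have hTval : ∑' n, T n = 2 ^ (-s) * riemannZeta s := by
    have hinj : Function.Injective (fun m : ℕ => 2 * m) := fun a b hab => by
      have : 2 * a = 2 * b := hab
      omega
    have hvan : Function.support T ⊆ Set.range (fun m : ℕ => 2 * m) :=
      Function.support_subset_iff'.mpr (fun n hn => Set.indicator_of_notMem hn S)
    rw [← Function.Injective.tsum_eq hinj hvan]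
    have : ∀ m : ℕ, T (2 * m) = 2 ^ (-s) * S m := by
      intro m
      have hmem : (2*m) ∈ Set.range (fun m : ℕ => 2 * m) := ⟨m, rfl⟩
      rw [hT, Set.indicator_of_mem hmem, hS]
      show (1 : ℂ) / ((2 * m : ℕ) : ℂ) ^ s = 2 ^ (-s) * ((1:ℂ) / (m:ℂ) ^ s)
      rcases Nat.eq_zero_or_pos m with h | h
      · simp [h, Complex.zero_cpow hsne]
      · have h2 : ((2 * m : ℕ) : ℂ) ^ s = (2:ℂ) ^ s * (m:ℂ) ^ s := by
          push_cast
          rw [show ((2:ℂ)) = ((2:ℝ):ℂ) by norm_num,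
            show ((m:ℂ)) = ((m:ℝ):ℂ) by norm_num,
            ← mul_cpow_ofReal_nonneg (by norm_num) (by positivity)]
        rw [h2, Complex.cpow_neg, div_eq_mul_inv, div_eq_mul_inv, mul_inv]
        ring
    simp_rw [this]
    rw [tsum_mul_left, ← zeta_eq_tsum_one_div_nat_cpow hs]
  have hη : ∑' n, aη n / (n : ℂ) ^ s = (1 - 2 ^ (1-s)) * riemannZeta s := by
    calc ∑' n, aη n / (n : ℂ) ^ s = ∑' n, (S n - 2 * T n) := by
            exact tsum_congr hpt
      _ = ∑' n, S n - ∑' n, (2 * T n) := Summable.tsum_sub hSsum (hTsum.mul_left 2)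
      _ = riemannZeta s - 2 * (2 ^ (-s) * riemannZeta s) := by
            rw [tsum_mul_left, hTval, ← zeta_eq_tsum_one_div_nat_cpow hs]
      _ = (1 - 2 ^ (1-s)) * riemannZeta s := by
            have : (2:ℂ) ^ (1 - s) = 2 * 2 ^ (-s) := by
              rw [sub_eq_add_neg, Complex.cpow_add _ _ (by norm_num), Complex.cpow_one]
            rw [this]
            ring
  -- combine
  have hsum2 : ∀ n : ℕ, Complex.Gamma s * aη n / ((n:ℝ):ℂ) ^ s
      = Complex.Gamma s * (aη n / (n : ℂ) ^ s) := by
    intro n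
    push_cast
    rw [mul_div_assoc]
  rw [funext hsum2] at hmain
  have := hmain.tsum_eq
  rw [tsum_mul_left, hη] at this
  rw [← this, mul_assoc]

lemma continuous_Fη : Continuous Fη := by
  apply Complex.continuous_ofReal.comp
  exact (continuous_const.add Real.continuous_exp).inv₀
    (fun x => (add_pos one_pos (Real.exp_pos x)).ne')

lemma mellin_Fη_differentiable {s : ℂ} (hs : 0 < s.re) :
    DifferentiableAt ℂ (mellin Fη) s := by
  refine mellin_differentiableAt_of_isBigO_rpow_exp (a := 1) (b := 0) one_pos
    (continuous_Fη.locallyIntegrable.locallyIntegrableOn _) ?_ ?_ hs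
  · apply isBigO_of_le
    intro x
    simp only [Fη, Complex.norm_real, Real.norm_eq_abs, Real.abs_exp, neg_one_mul]
    rw [abs_of_pos (by positivity), Real.exp_neg]
    apply inv_anti₀ (Real.exp_pos _)
    nlinarith [Real.exp_pos x]
  · apply isBigO_of_le
    intro x
    simp only [Fη, Complex.norm_real, Real.norm_eq_abs, neg_zero, Real.rpow_zero, norm_one]
    rw [abs_of_pos (by positivity : (0:ℝ) < (1 + Real.exp x)⁻¹)]
    rw [inv_le_one_iff₀]
    right
    nlinarith [Real.exp_pos x]

lemma U_preconnected : IsPreconnected ({z : ℂ | 0 < z.re} \ {1}) := by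
  set A : Set ℂ := {z | 0 < z.re} ∩ {z | z.re < 1} with hA
  set B : Set ℂ := {z | 1 < z.re} with hB
  set C1 : Set ℂ := {z | 0 < z.re} ∩ {z | 0 < z.im} with hC1
  set C2 : Set ℂ := {z | 0 < z.re} ∩ {z | z.im < 0} with hC2
  have pA : IsPreconnected A :=
    ((convex_halfSpace_re_gt 0).inter (convex_halfSpace_re_lt 1)).isPreconnected
  have pB : IsPreconnected B := (convex_halfSpace_re_gt 1).isPreconnected
  have pC1 : IsPreconnected C1 :=
    ((convex_halfSpace_re_gt 0).inter (convex_halfSpace_im_gt 0)).isPreconnected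
  have pC2 : IsPreconnected C2 :=
    ((convex_halfSpace_re_gt 0).inter (convex_halfSpace_im_lt 0)).isPreconnected
  have p1 : IsPreconnected (C1 ∪ A) := by
    apply IsPreconnected.union (((1:ℝ)/2 : ℂ) + Complex.I)
    · constructor <;> simp
    · constructor <;> simp <;> norm_num
    · exact pC1
    · exact pA
  have p2 : IsPreconnected ((C1 ∪ A) ∪ C2) := by
    apply IsPreconnected.union (((1:ℝ)/2 : ℂ) - Complex.I)
    · apply Set.mem_union_right
      constructor <;> simp <;> norm_num
    · constructor <;> simp
    · exact p1
    · exact pC2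
  have p3 : IsPreconnected (((C1 ∪ A) ∪ C2) ∪ B) := by
    apply IsPreconnected.union ((2 : ℂ) + Complex.I)
    · have h2 : (2:ℂ) + Complex.I ∈ C1 := ⟨by simp, by simp⟩
      exact Set.mem_union_left _ (Set.mem_union_left _ h2)
    · simp [hB]
    · exact p2
    · exact pB
  have hEq : {z : ℂ | 0 < z.re} \ {1} = ((C1 ∪ A) ∪ C2) ∪ B := by
    ext z
    simp only [Set.mem_diff, Set.mem_setOf_eq, Set.mem_singleton_iff, Set.mem_union,
      Set.mem_inter_iff, hA, hB, hC1, hC2]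
    constructor
    · rintro ⟨h0, h1⟩
      rcases lt_trichotomy z.im 0 with him | him | him
      · exact Or.inl (Or.inr ⟨h0, him⟩)
      · have hre : z.re ≠ 1 := by
          intro hre
          exact h1 (Complex.ext (by simpa using hre) (by simpa using him))
        rcases lt_or_gt_of_ne hre with h | h
        · exact Or.inl (Or.inl (Or.inr ⟨h0, h⟩))
        · exact Or.inr h
      · exact Or.inl (Or.inl (Or.inl ⟨h0, him⟩))
    · rintro (((⟨h0, him⟩ | ⟨h0, hre⟩) | ⟨h0, him⟩) | h)
      · exact ⟨h0, fun h => by simp [h] at him⟩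
      · exact ⟨h0, fun h => by simp [h] at hre⟩
      · exact ⟨h0, fun h => by simp [h] at him⟩
      · refine ⟨by linarith, fun hz => ?_⟩
        rw [hz] at h
        simp at h
  rw [hEq]
  exact p3

lemma mellin_Fη_eq' {s : ℂ} (hs : 0 < s.re) (hs1 : s ≠ 1) :
    mellin Fη s = Complex.Gamma s * (1 - 2 ^ (1 - s)) * riemannZeta s := by
  set U : Set ℂ := {z : ℂ | 0 < z.re} \ {1} with hU
  have hUo : IsOpen U :=
    (continuous_re.isOpen_preimage _ isOpen_Ioi).sdiff isClosed_singleton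
  have hGamma : ∀ z ∈ U, ∀ m : ℕ, z ≠ -↑m := by
    rintro z ⟨hz0, _⟩ m h
    rw [h] at hz0
    simp only [Set.mem_setOf_eq, Complex.neg_re, Complex.natCast_re] at hz0
    have : (0:ℝ) ≤ m := Nat.cast_nonneg m
    linarith
  have hM : AnalyticOnNhd ℂ (mellin Fη) U := by
    refine DifferentiableOn.analyticOnNhd (fun z hz => ?_) hUo
    exact (mellin_Fη_differentiable hz.1).differentiableWithinAt
  have hG : AnalyticOnNhd ℂ
      (fun z => Complex.Gamma z * (1 - 2 ^ (1 - z)) * riemannZeta z) U := by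
    refine DifferentiableOn.analyticOnNhd (fun z hz => ?_) hUo
    apply DifferentiableAt.differentiableWithinAt
    have h1 : DifferentiableAt ℂ Complex.Gamma z :=
      Complex.differentiableAt_Gamma z (hGamma z hz)
    have h2 : DifferentiableAt ℂ (fun z : ℂ => 1 - (2:ℂ) ^ (1 - z)) z := by
      apply (differentiableAt_const _).sub
      exact DifferentiableAt.const_cpow ((differentiableAt_const _).sub differentiableAt_id)
        (Or.inl two_ne_zero)
    have h3 : DifferentiableAt ℂ riemannZeta z := differentiableAt_riemannZeta hz.2
    exact (h1.mul h2).mul h3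
  have h2mem : (2:ℂ) ∈ U := by
    constructor
    · simp
    · intro h
      simp at h
  have hsmem : s ∈ U := ⟨hs, hs1⟩
  have heq := hM.eqOn_of_preconnected_of_eventuallyEq hG U_preconnected h2mem ?_ hsmem
  · exact heq
  · have hnhds : {z : ℂ | 1 < z.re} ∈ nhds (2:ℂ) := by
      apply (continuous_re.isOpen_preimage _ isOpen_Ioi).mem_nhds
      simp
    filter_upwards [hnhds] with z hz
    exact mellin_Fη_eq hz

lemma fourier_eq_mellin (σ t : ℝ) :
    (∫ x : ℝ, Complex.exp (Complex.I * t * x)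
        * ((Real.exp (σ * x) / (1 + Real.exp (Real.exp x)) : ℝ) : ℂ))
      = mellin Fη ((σ : ℂ) + t * Complex.I) := by
  set s : ℂ := (σ : ℂ) + t * Complex.I with hs
  have himg : Ioi (0:ℝ) = Real.exp '' Set.univ := by
    rw [Set.image_univ, Real.range_exp]
  rw [mellin, himg]
  rw [integral_image_eq_integral_abs_deriv_smul MeasurableSet.univ
    (fun x _ => (Real.hasDerivAt_exp x).hasDerivWithinAt) Real.exp_injective.injOn]
  rw [setIntegral_univ]
  congr 1
  funext x
  have hlog : Complex.log ((Real.exp x : ℝ) : ℂ) = (x : ℂ) := by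
    rw [Complex.ofReal_exp, Complex.log_exp] <;> simp [Real.pi_pos.le, Real.pi_pos]
  have hcpow : ∀ w : ℂ, ((Real.exp x : ℝ) : ℂ) ^ w = Complex.exp (w * x) := by
    intro w
    rw [Complex.cpow_def_of_ne_zero (by exact_mod_cast (Real.exp_pos x).ne'), hlog,
      mul_comm]
  rw [abs_of_pos (Real.exp_pos x)]
  rw [real_smul, smul_eq_mul, hcpow]
  rw [Complex.ofReal_exp]
  rw [← mul_assoc, ← Complex.exp_add]
  have : (x:ℂ) + (s - 1) * x = σ * x + (Complex.I * t * x) := by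
    rw [hs]; ring
  rw [this, Complex.exp_add]
  have hexp : Complex.exp ((σ:ℂ) * x) = ((Real.exp (σ * x) : ℝ) : ℂ) := by
    rw [Complex.ofReal_exp, Complex.ofReal_mul]
  rw [hexp, Fη]
  push_cast
  rw [div_eq_mul_inv]
  ring

/-- For `0 < σ < 1` and `t ∈ ℝ`:
`ζ(σ+it) = 0` iff `∫_ℝ e^{itx} V_σ(x) dx = 0`. -/
theorem zeta_zero_iff_fourier_V_zero (σ t : ℝ) (hσ0 : 0 < σ) (hσ1 : σ < 1) :
    riemannZeta ((σ : ℂ) + t * Complex.I) = 0 ↔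
      ∫ x : ℝ, Complex.exp (Complex.I * t * x)
          * ((Real.exp (σ * x) / (1 + Real.exp (Real.exp x)) : ℝ) : ℂ) = 0 := by
  have hre : ((σ : ℂ) + t * Complex.I).re = σ := by simp
  have hs0 : 0 < ((σ : ℂ) + t * Complex.I).re := by rw [hre]; exact hσ0
  have hs1 : (σ : ℂ) + t * Complex.I ≠ 1 := by
    intro h
    rw [h] at hre
    simp at hre
    linarith
  rw [fourier_eq_mellin σ t, mellin_Fη_eq' hs0 hs1]
  have hΓ : Complex.Gamma ((σ : ℂ) + t * Complex.I) ≠ 0 := by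
    apply Complex.Gamma_ne_zero
    intro m h
    rw [h] at hs0
    simp only [Complex.neg_re, Complex.natCast_re] at hs0
    have : (0:ℝ) ≤ m := Nat.cast_nonneg m
    linarith
  have h2 : (1 : ℂ) - 2 ^ (1 - ((σ : ℂ) + t * Complex.I)) ≠ 0 := by
    intro h
    have heq : (2:ℂ) ^ (1 - ((σ : ℂ) + t * Complex.I)) = 1 := by
      have := sub_eq_zero.mp h
      exact this.symm
    have habs : ‖(2:ℂ) ^ (1 - ((σ : ℂ) + t * Complex.I))‖ = 1 := by
      rw [heq]; simp
    rw [show (2:ℂ) = ((2:ℝ):ℂ) by norm_num,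
      Complex.norm_cpow_eq_rpow_re_of_pos two_pos] at habs
    have hre2 : (1 - ((σ : ℂ) + t * Complex.I)).re = 1 - σ := by simp
    rw [hre2] at habs
    have := Real.log_rpow two_pos (1 - σ)
    rw [habs, Real.log_one] at this
    have hlog2 : Real.log 2 ≠ 0 := by
      have := Real.log_pos (by norm_num : (1:ℝ) < 2)
      linarith
    have : 1 - σ = 0 := by
      rcases mul_eq_zero.mp this.symm with h' | h'
      · exact h'
      · exact absurd h' hlog2
    linarith
  constructor
  · intro h
    rw [h, mul_zero]
  · intro h
    rcases mul_eq_zero.mp h with h' | hζ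
    · rcases mul_eq_zero.mp h' with h1 | h2'
      · exact absurd h1 hΓ
      · exact absurd h2' h2
    · exact hζ
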